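/- For distinct i,j,k,l ∈ [4], any γ ∈ Γ_4^3, and the action defined above: o_{π_{(ij)}γ}({i,j,k}) = -o_γ({i,j,k}), o_{π_{(ij)}γ}({i,j,l}) = -o_γ({i,j,l}), o_{π_{(ij)}γ}({j,k,l}) = o_γ({j,k,l}), and o_{π_{(ij)}γ}({k,i,l}) = o_γ({k,i,l}); consequently G embeds as a subgroup of (Z/2)^4. -/

import Mathlib

open Equiv Equiv.Perm

/- We model `Γ₄³`, the cyclic orderings `(i j k)` of 3-element subsets of `[4]`, as the
3-cycles in the permutation group of `Fin 4`: `(i j k)` is the 3-cycle `i ↦ j ↦ k ↦ i`.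
Reversal `-(i j k) = (k j i)` corresponds to inversion. -/

/-- The 3-cycle `i ↦ j ↦ k ↦ i` (for distinct `i j k`). -/
def c3 (i j k : Fin 4) : Equiv.Perm (Fin 4) := Equiv.swap i j * Equiv.swap j k

/-- The fourth element of `Fin 4` besides the distinct elements `a b c`
(using `0+1+2+3 = 2` in `Fin 4`). -/
def fourth (a b c : Fin 4) : Fin 4 := 2 - a - b - c

/-- The map `π_{(ab)} : Γ₄³ → Γ₄³`, determined by `π_{(ij)}(ijk) = (jil)` and
`π_{(kl)}(ijk) = (ijl)` for `{i,j,k,l} = [4]`. If both `a,b` lie in the support of the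
3-cycle `γ`, reverse them and swap the third element for the fourth; otherwise exchange
the roles of `a` and `b` (conjugation by `swap a b`). -/
def piAct (a b : Fin 4) : Function.End (Equiv.Perm (Fin 4)) := fun γ =>
  if γ a ≠ a ∧ γ b ≠ b then
    (if γ a = b then c3 b a (fourth a b (γ b)) else c3 a b (fourth a b (γ a)))
  else Equiv.swap a b * γ * Equiv.swap a b

/-- `o_γ(S)`, for `S = {i,j,k}`: the cyclic orientation induced by `γ` on `{i,j,k}`;
it is `γ` itself if `{i,j,k}` is the support of `γ`, and otherwise is obtained from `γ` by
exchanging the element of the support outside `S` with the element of `S` outside the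
support (conjugation by the corresponding transposition). -/
def oFun (γ : Equiv.Perm (Fin 4)) (i j k : Fin 4) : Equiv.Perm (Fin 4) :=
  if γ i = i then Equiv.swap i (fourth i j k) * γ * Equiv.swap i (fourth i j k)
  else if γ j = j then Equiv.swap j (fourth i j k) * γ * Equiv.swap j (fourth i j k)
  else if γ k = k then Equiv.swap k (fourth i j k) * γ * Equiv.swap k (fourth i j k)
  else γ

/-- The generators `π_α` for all 2-element subsets `α ⊆ [4]`. -/
def piGens : Set (Function.End (Equiv.Perm (Fin 4))) :=
  {f | ∃ a b : Fin 4, a ≠ b ∧ f = piAct a b}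

/-! Auxiliary machinery -/

def tA : Fin 4 → Fin 4 := ![0, 0, 1, 2]
def tB : Fin 4 → Fin 4 := ![1, 1, 2, 0]
def tC : Fin 4 → Fin 4 := ![2, 3, 3, 3]

def Ofn (γ : Equiv.Perm (Fin 4)) (m : Fin 4) : Equiv.Perm (Fin 4) :=
  oFun γ (tA m) (tB m) (tC m)

def g0 : Equiv.Perm (Fin 4) := c3 0 1 2

def sgn (g : Function.End (Equiv.Perm (Fin 4))) (m : Fin 4) : Bool :=
  decide (Ofn (g g0) m ≠ Ofn g0 m)

def Good (g : Function.End (Equiv.Perm (Fin 4))) : Prop :=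
  ∀ γ : Equiv.Perm (Fin 4), γ ^ 3 = 1 → γ ≠ 1 →
    (g γ) ^ 3 = 1 ∧ g γ ≠ 1 ∧
    ∀ m : Fin 4, Ofn (g γ) m = if sgn g m then (Ofn γ m)⁻¹ else Ofn γ m

lemma g0_cube : g0 ^ 3 = 1 := by decide
lemma g0_ne : g0 ≠ 1 := by decide

lemma inv_ne_O : ∀ γ : Equiv.Perm (Fin 4), γ ^ 3 = 1 → γ ≠ 1 → ∀ m : Fin 4,
    (Ofn γ m)⁻¹ ≠ Ofn γ m := by decide

lemma determine : ∀ γ δ : Equiv.Perm (Fin 4), γ ^ 3 = 1 → γ ≠ 1 → δ ^ 3 = 1 → δ ≠ 1 →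
    (∀ m : Fin 4, Ofn γ m = Ofn δ m) → γ = δ := by decide

lemma good_one : Good 1 := by simp only [Good]; decide

instance decEqEnd (f : Function.End (Equiv.Perm (Fin 4))) (γ δ : Equiv.Perm (Fin 4)) :
    Decidable (f γ = δ) := decEq _ _

set_option maxHeartbeats 4000000 in
set_option synthInstance.maxSize 2000 in
set_option synthInstance.maxHeartbeats 2000000 in
set_option maxRecDepth 100000 in
lemma good_gen : ∀ a b : Fin 4, a ≠ b → Good (piAct a b) := by simp only [Good]; decide

lemma sgn_mul {g h : Function.End (Equiv.Perm (Fin 4))} (hg : Good g) (hh : Good h)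
    (m : Fin 4) : sgn (g * h) m = xor (sgn g m) (sgn h m) := by
  have Hh := hh g0 g0_cube g0_ne
  have Hg := hg (h g0) Hh.1 Hh.2.1
  have e1 : Ofn ((g * h) g0) m = if sgn g m then (Ofn (h g0) m)⁻¹ else Ofn (h g0) m :=
    Hg.2.2 m
  have e2 : Ofn (h g0) m = if sgn h m then (Ofn g0 m)⁻¹ else Ofn g0 m := Hh.2.2 m
  have hne := inv_ne_O g0 g0_cube g0_ne m
  rw [e2] at e1
  cases hgm : sgn g m <;> cases hhm : sgn h m <;>
    simp only [hgm, hhm, if_true, if_false, inv_inv] at e1 <;>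
    simp [sgn, e1, hne]

lemma good_mul {g h : Function.End (Equiv.Perm (Fin 4))} (hg : Good g) (hh : Good h) :
    Good (g * h) := by
  intro γ h3 h1
  have Hh := hh γ h3 h1
  have Hg := hg (h γ) Hh.1 Hh.2.1
  refine ⟨Hg.1, Hg.2.1, fun m => ?_⟩
  have e1 : Ofn ((g * h) γ) m = if sgn g m then (Ofn (h γ) m)⁻¹ else Ofn (h γ) m :=
    Hg.2.2 m
  rw [Hh.2.2 m] at e1
  rw [e1, sgn_mul hg hh m]
  cases sgn g m <;> cases sgn h m <;> simp [inv_inv]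

lemma good_closure : ∀ g ∈ Submonoid.closure piGens, Good g := by
  intro g hg
  induction hg using Submonoid.closure_induction with
  | mem x hx => obtain ⟨a, b, hab, rfl⟩ := hx; exact good_gen a b hab
  | one => exact good_one
  | mul x y _ _ hx hy => exact good_mul hx hy

lemma threecycle_data {γ : Equiv.Perm (Fin 4)} (hγ : γ.IsThreeCycle) :
    γ ^ 3 = 1 ∧ γ ≠ 1 := by
  constructor
  · have := hγ.orderOf
    rw [← this]; exact pow_orderOf_eq_one γ
  · rintro rfl
    simp [Equiv.Perm.IsThreeCycle] at hγ

set_option maxHeartbeats 4000000 in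
set_option synthInstance.maxSize 2000 in
set_option synthInstance.maxHeartbeats 2000000 in
set_option maxRecDepth 100000 in
lemma first_part : ∀ i j k l : Fin 4, i ≠ j → i ≠ k → i ≠ l → j ≠ k → j ≠ l → k ≠ l →
    ∀ γ : Equiv.Perm (Fin 4), γ ^ 3 = 1 → γ ≠ 1 →
      oFun (piAct i j γ) i j k = (oFun γ i j k)⁻¹ ∧
      oFun (piAct i j γ) i j l = (oFun γ i j l)⁻¹ ∧
      oFun (piAct i j γ) j k l = oFun γ j k l ∧
      oFun (piAct i j γ) k i l = oFun γ k i l := by decide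

/-- The effect of `π_{(ij)}` on the orientation data `o_γ`: it reverses the orientations of
`{i,j,k}` and `{i,j,l}` and fixes those of `{j,k,l}` and `{k,i,l}`; consequently the group
`G` generated by the `π_α` embeds in `(ℤ/2)⁴` (elements of `G` with equal images act
identically on `Γ₄³`). -/
theorem piAct_effect_on_o (i j k l : Fin 4)
    (hij : i ≠ j) (hik : i ≠ k) (hil : i ≠ l) (hjk : j ≠ k) (hjl : j ≠ l) (hkl : k ≠ l) :
    (∀ γ : Equiv.Perm (Fin 4), γ.IsThreeCycle →
      oFun (piAct i j γ) i j k = (oFun γ i j k)⁻¹ ∧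
      oFun (piAct i j γ) i j l = (oFun γ i j l)⁻¹ ∧
      oFun (piAct i j γ) j k l = oFun γ j k l ∧
      oFun (piAct i j γ) k i l = oFun γ k i l) ∧
    ∃ f : Function.End (Equiv.Perm (Fin 4)) → (Fin 4 → ZMod 2),
      (∀ g ∈ Submonoid.closure piGens, ∀ h ∈ Submonoid.closure piGens,
        f (g * h) = f g + f h) ∧
      (∀ g ∈ Submonoid.closure piGens, ∀ h ∈ Submonoid.closure piGens,
        f g = f h → ∀ γ : Equiv.Perm (Fin 4), γ.IsThreeCycle → g γ = h γ) := by
  constructor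
  · intro γ hγ
    obtain ⟨h3, h1⟩ := threecycle_data hγ
    exact first_part i j k l hij hik hil hjk hjl hkl γ h3 h1
  · refine ⟨fun g m => if sgn g m then 1 else 0, ?_, ?_⟩
    · intro g hg h hh
      funext m
      simp only [Pi.add_apply]
      rw [sgn_mul (good_closure g hg) (good_closure h hh) m]
      cases sgn g m <;> cases sgn h m <;> simp <;> decide
    · intro g hg h hh hfe γ hγ
      obtain ⟨h3, h1⟩ := threecycle_data hγ
      have Hg := good_closure g hg γ h3 h1
      have Hh := good_closure h hh γ h3 h1
      have hs : ∀ m : Fin 4, sgn g m = sgn h m := by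
        intro m
        have := congrFun hfe m
        cases hgm : sgn g m <;> cases hhm : sgn h m <;>
          simp [hgm, hhm] at this ⊢ <;> exact absurd this (by decide)
      apply determine _ _ Hg.1 Hg.2.1 Hh.1 Hh.2.1
      intro m
      rw [Hg.2.2 m, Hh.2.2 m, hs m]
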